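/- For every matrix M ∈ K and every (u,v,w) ∈ ℂ³, one has C₆(M·(u,v,w)) = C₆(u,v,w), C₉(M·(u,v,w)) = C₉(u,v,w), and C₁₂(M·(u,v,w)) = C₁₂(u,v,w); that is, C₆, C₉, C₁₂ are K-invariant polynomials. -/
import Mathlib

set_option maxRecDepth 100000
set_option maxHeartbeats 1000000
set_option linter.unreachableTactic false
set_option linter.unusedTactic false



open Matrix Complex

noncomputable section

def ε : ℂ := Complex.exp (2 * Real.pi * Complex.I / 3)

lemma hε : IsPrimitiveRoot ε 3 := by
  have := Complex.isPrimitiveRoot_exp 3 (by norm_num)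
  simpa [ε] using this

lemma hε3 : ε ^ 3 = 1 := hε.pow_eq_one

lemma hεne0 : ε ≠ 0 := by
  intro h
  have := hε3
  rw [h] at this
  simp at this

lemma hεne1 : ε ≠ 1 := hε.ne_one (by norm_num)

def matA : Matrix (Fin 3) (Fin 3) ℂ := !![0,1,0; 0,0,1; 1,0,0]
def matB : Matrix (Fin 3) (Fin 3) ℂ := !![1,0,0; 0,0,1; 0,1,0]
def matC : Matrix (Fin 3) (Fin 3) ℂ := !![1,0,0; 0,ε,0; 0,0,ε^2]
def matD : Matrix (Fin 3) (Fin 3) ℂ := !![1,0,0; 0,ε,0; 0,0,ε]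
def matE : Matrix (Fin 3) (Fin 3) ℂ :=
  (Complex.I * Real.sqrt 3)⁻¹ • !![1,1,1; 1,ε,ε^2; 1,ε^2,ε]

lemma detA : matA.det ≠ 0 := by
  simp [matA, Matrix.det_fin_three]

lemma detC : matC.det ≠ 0 := by
  simp [matC, Matrix.det_fin_three]
  exact fun h => hεne0 h

lemma detD : matD.det ≠ 0 := by
  simp [matD, Matrix.det_fin_three]
  exact fun h => hεne0 h

lemma detE : matE.det ≠ 0 := by
  have h1 : (!![1,1,1; 1,ε,ε^2; 1,ε^2,ε] : Matrix (Fin 3) (Fin 3) ℂ).det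
      = 3 * ε * (ε - 1) := by
    have h4 : ε ^ 4 = ε := by
      calc ε ^ 4 = ε ^ 3 * ε := by ring
      _ = ε := by rw [hε3]; ring
    simp [Matrix.det_fin_three, Matrix.vecHead, Matrix.vecTail]
    linear_combination (-1 : ℂ) * h4
  have h2 : (Complex.I * (Real.sqrt 3 : ℂ)) ≠ 0 :=
    mul_ne_zero Complex.I_ne_zero
      (by exact_mod_cast (Real.sqrt_pos.mpr (by norm_num : (0:ℝ) < 3)).ne')
  rw [matE, Matrix.det_smul, h1]
  apply mul_ne_zero
  · apply pow_ne_zero; exact inv_ne_zero h2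
  · apply mul_ne_zero (mul_ne_zero (by norm_num) hεne0)
    exact sub_ne_zero.mpr hεne1

def genA : GL (Fin 3) ℂ := Matrix.GeneralLinearGroup.mkOfDetNeZero matA detA
def genB : GL (Fin 3) ℂ := Matrix.GeneralLinearGroup.mkOfDetNeZero matB (by simp [matB, Matrix.det_fin_three])
def genC : GL (Fin 3) ℂ := Matrix.GeneralLinearGroup.mkOfDetNeZero matC detC
def genD : GL (Fin 3) ℂ := Matrix.GeneralLinearGroup.mkOfDetNeZero matD detD
def genE : GL (Fin 3) ℂ := Matrix.GeneralLinearGroup.mkOfDetNeZero matE detE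

def K : Subgroup (GL (Fin 3) ℂ) := Subgroup.closure {genA, genC, genD, genE}

def C6 (u v w : ℂ) : ℂ :=
  u ^ 6 + v ^ 6 + w ^ 6 - 10 * (u ^ 3 * v ^ 3 + u ^ 3 * w ^ 3 + v ^ 3 * w ^ 3)

def C9 (u v w : ℂ) : ℂ := (u ^ 3 - v ^ 3) * (u ^ 3 - w ^ 3) * (v ^ 3 - w ^ 3)

def C12 (u v w : ℂ) : ℂ :=
  (u ^ 12 + v ^ 12 + w ^ 12)
    + 4 * (u ^ 9 * v ^ 3 + u ^ 9 * w ^ 3 + v ^ 9 * u ^ 3 + v ^ 9 * w ^ 3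
        + w ^ 9 * u ^ 3 + w ^ 9 * v ^ 3)
    + 6 * (u ^ 6 * v ^ 6 + u ^ 6 * w ^ 6 + v ^ 6 * w ^ 6)
    + 228 * (u ^ 6 * v ^ 3 * w ^ 3 + v ^ 6 * u ^ 3 * w ^ 3 + w ^ 6 * u ^ 3 * v ^ 3)


lemma he2 : ε ^ 2 + ε + 1 = 0 := by
  have h2 : (ε - 1) * (ε ^ 2 + ε + 1) = 0 := by linear_combination hε3
  rcases mul_eq_zero.mp h2 with h | h
  · exact absurd (sub_eq_zero.mp h) hεne1
  · exact h

lemma hεval : ε = -(1/2) + (Real.sqrt 3 / 2 : ℝ) * Complex.I := by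
  have h1 : (2 * (Real.pi : ℂ) * Complex.I / 3) = ((2 * Real.pi / 3 : ℝ) : ℂ) * Complex.I := by
    push_cast; ring
  unfold ε
  rw [h1, Complex.exp_mul_I, ← Complex.ofReal_cos, ← Complex.ofReal_sin]
  have hc : Real.cos (2 * Real.pi / 3) = -(1/2) := by
    rw [show (2 * Real.pi / 3 : ℝ) = Real.pi - Real.pi / 3 by ring, Real.cos_pi_sub,
      Real.cos_pi_div_three]
  have hs' : Real.sin (2 * Real.pi / 3) = Real.sqrt 3 / 2 := by
    rw [show (2 * Real.pi / 3 : ℝ) = Real.pi - Real.pi / 3 by ring, Real.sin_pi_sub,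
      Real.sin_pi_div_three]
  rw [hc, hs']
  push_cast; ring

lemma hsval : Complex.I * (Real.sqrt 3 : ℂ) = 2 * ε + 1 := by
  rw [hεval]; push_cast; ring

lemma htval : (Complex.I * (Real.sqrt 3 : ℂ))⁻¹ = -(2 * ε + 1) / 3 := by
  rw [hsval]
  exact inv_eq_of_mul_eq_one_right (by linear_combination (-(4:ℂ)/3) * he2)


lemma keyC6 (a b c e : ℂ) (h3 : e^3=1) :
    C6 (a) (e*b) (e^2*c) = C6 a b c := by
  simp only [C6]
  linear_combination (((1:ℂ)*c^6 + (1:ℂ)*c^6*e^3 + (1:ℂ)*c^6*e^6 + (1:ℂ)*c^6*e^9 + (-10:ℂ)*b^3*c^3 + (-10:ℂ)*b^3*c^3*e^3 + (-10:ℂ)*b^3*c^3*e^6 + (1:ℂ)*b^6 + (1:ℂ)*b^6*e^3 + (-10:ℂ)*a^3*c^3 + (-10:ℂ)*a^3*c^3*e^3 + (-10:ℂ)*a^3*b^3)) * h3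

lemma keyC9 (a b c e : ℂ) (h3 : e^3=1) :
    C9 (a) (e*b) (e^2*c) = C9 a b c := by
  simp only [C9]
  linear_combination (((-1:ℂ)*b^3*c^6 + (-1:ℂ)*b^3*c^6*e^3 + (-1:ℂ)*b^3*c^6*e^6 + (-1:ℂ)*b^3*c^6*e^9 + (-1:ℂ)*b^3*c^6*e^12 + (1:ℂ)*b^6*c^3 + (1:ℂ)*b^6*c^3*e^3 + (1:ℂ)*b^6*c^3*e^6 + (1:ℂ)*b^6*c^3*e^9 + (1:ℂ)*a^3*c^6 + (1:ℂ)*a^3*c^6*e^3 + (1:ℂ)*a^3*c^6*e^6 + (1:ℂ)*a^3*c^6*e^9 + (-1:ℂ)*a^3*b^6 + (-1:ℂ)*a^3*b^6*e^3 + (-1:ℂ)*a^6*c^3 + (-1:ℂ)*a^6*c^3*e^3 + (1:ℂ)*a^6*b^3)) * h3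

lemma keyC12 (a b c e : ℂ) (h3 : e^3=1) :
    C12 (a) (e*b) (e^2*c) = C12 a b c := by
  simp only [C12]
  linear_combination (((1:ℂ)*c^12 + (1:ℂ)*c^12*e^3 + (1:ℂ)*c^12*e^6 + (1:ℂ)*c^12*e^9 + (1:ℂ)*c^12*e^12 + (1:ℂ)*c^12*e^15 + (1:ℂ)*c^12*e^18 + (1:ℂ)*c^12*e^21 + (4:ℂ)*b^3*c^9 + (4:ℂ)*b^3*c^9*e^3 + (4:ℂ)*b^3*c^9*e^6 + (4:ℂ)*b^3*c^9*e^9 + (4:ℂ)*b^3*c^9*e^12 + (4:ℂ)*b^3*c^9*e^15 + (4:ℂ)*b^3*c^9*e^18 + (6:ℂ)*b^6*c^6 + (6:ℂ)*b^6*c^6*e^3 + (6:ℂ)*b^6*c^6*e^6 + (6:ℂ)*b^6*c^6*e^9 + (6:ℂ)*b^6*c^6*e^12 + (6:ℂ)*b^6*c^6*e^15 + (4:ℂ)*b^9*c^3 + (4:ℂ)*b^9*c^3*e^3 + (4:ℂ)*b^9*c^3*e^6 + (4:ℂ)*b^9*c^3*e^9 + (4:ℂ)*b^9*c^3*e^12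 + (1:ℂ)*b^12 + (1:ℂ)*b^12*e^3 + (1:ℂ)*b^12*e^6 + (1:ℂ)*b^12*e^9 + (4:ℂ)*a^3*c^9 + (4:ℂ)*a^3*c^9*e^3 + (4:ℂ)*a^3*c^9*e^6 + (4:ℂ)*a^3*c^9*e^9 + (4:ℂ)*a^3*c^9*e^12 + (4:ℂ)*a^3*c^9*e^15 + (228:ℂ)*a^3*b^3*c^6 + (228:ℂ)*a^3*b^3*c^6*e^3 + (228:ℂ)*a^3*b^3*c^6*e^6 + (228:ℂ)*a^3*b^3*c^6*e^9) + ((228:ℂ)*a^3*b^3*c^6*e^12 + (228:ℂ)*a^3*b^6*c^3 + (228:ℂ)*a^3*b^6*c^3*e^3 + (228:ℂ)*a^3*b^6*c^3*e^6 + (228:ℂ)*a^3*b^6*c^3*e^9 + (4:ℂ)*a^3*b^9 + (4:ℂ)*a^3*b^9*e^3 + (4:ℂ)*a^3*b^9*e^6 + (6:ℂ)*a^6*c^6 + (6:ℂ)*a^6*c^6*e^3 + (6:ℂ)*a^6*c^6*e^6 + (6:ℂ)*a^6*c^6*e^9 + (228:ℂ)*a^6*b^3*c^3 + (228:ℂ)*a^6*b^3*c^3*e^3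 + (228:ℂ)*a^6*b^3*c^3*e^6 + (6:ℂ)*a^6*b^6 + (6:ℂ)*a^6*b^6*e^3 + (4:ℂ)*a^9*c^3 + (4:ℂ)*a^9*c^3*e^3 + (4:ℂ)*a^9*b^3)) * h3

lemma keyD6 (a b c e : ℂ) (h3 : e^3=1) :
    C6 (a) (e*b) (e*c) = C6 a b c := by
  simp only [C6]
  linear_combination (((1:ℂ)*c^6 + (1:ℂ)*c^6*e^3 + (-10:ℂ)*b^3*c^3 + (-10:ℂ)*b^3*c^3*e^3 + (1:ℂ)*b^6 + (1:ℂ)*b^6*e^3 + (-10:ℂ)*a^3*c^3 + (-10:ℂ)*a^3*b^3)) * h3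

lemma keyD9 (a b c e : ℂ) (h3 : e^3=1) :
    C9 (a) (e*b) (e*c) = C9 a b c := by
  simp only [C9]
  linear_combination (((-1:ℂ)*b^3*c^6 + (-1:ℂ)*b^3*c^6*e^3 + (-1:ℂ)*b^3*c^6*e^6 + (1:ℂ)*b^6*c^3 + (1:ℂ)*b^6*c^3*e^3 + (1:ℂ)*b^6*c^3*e^6 + (1:ℂ)*a^3*c^6 + (1:ℂ)*a^3*c^6*e^3 + (-1:ℂ)*a^3*b^6 + (-1:ℂ)*a^3*b^6*e^3 + (-1:ℂ)*a^6*c^3 + (1:ℂ)*a^6*b^3)) * h3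

lemma keyD12 (a b c e : ℂ) (h3 : e^3=1) :
    C12 (a) (e*b) (e*c) = C12 a b c := by
  simp only [C12]
  linear_combination (((1:ℂ)*c^12 + (1:ℂ)*c^12*e^3 + (1:ℂ)*c^12*e^6 + (1:ℂ)*c^12*e^9 + (4:ℂ)*b^3*c^9 + (4:ℂ)*b^3*c^9*e^3 + (4:ℂ)*b^3*c^9*e^6 + (4:ℂ)*b^3*c^9*e^9 + (6:ℂ)*b^6*c^6 + (6:ℂ)*b^6*c^6*e^3 + (6:ℂ)*b^6*c^6*e^6 + (6:ℂ)*b^6*c^6*e^9 + (4:ℂ)*b^9*c^3 + (4:ℂ)*b^9*c^3*e^3 + (4:ℂ)*b^9*c^3*e^6 + (4:ℂ)*b^9*c^3*e^9 + (1:ℂ)*b^12 + (1:ℂ)*b^12*e^3 + (1:ℂ)*b^12*e^6 + (1:ℂ)*b^12*e^9 + (4:ℂ)*a^3*c^9 + (4:ℂ)*a^3*c^9*e^3 + (4:ℂ)*a^3*c^9*e^6 + (228:ℂ)*a^3*b^3*c^6 + (228:ℂ)*a^3*b^3*c^6*e^3 + (228:ℂ)*a^3*b^3*c^6*e^6 +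 (228:ℂ)*a^3*b^6*c^3 + (228:ℂ)*a^3*b^6*c^3*e^3 + (228:ℂ)*a^3*b^6*c^3*e^6 + (4:ℂ)*a^3*b^9 + (4:ℂ)*a^3*b^9*e^3 + (4:ℂ)*a^3*b^9*e^6 + (6:ℂ)*a^6*c^6 + (6:ℂ)*a^6*c^6*e^3 + (228:ℂ)*a^6*b^3*c^3 + (228:ℂ)*a^6*b^3*c^3*e^3 + (6:ℂ)*a^6*b^6 + (6:ℂ)*a^6*b^6*e^3 + (4:ℂ)*a^9*c^3 + (4:ℂ)*a^9*b^3)) * h3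

lemma cube1 (a b c e : ℂ) (he : e^2+e+1 = 0) :
    (-(2*e+1)/3*(a+b+c))^3 = (2*e+1)/9*((a^3+b^3+c^3)+3*(a^2*b+b^2*c+c^2*a)+3*(a*b^2+b*c^2+c*a^2)+6*(a*b*c)) := by
  linear_combination (((-4/27:ℂ)*c^3 + (-8/27:ℂ)*c^3*e + (-4/9:ℂ)*b*c^2 + (-8/9:ℂ)*b*c^2*e + (-4/9:ℂ)*b^2*c + (-8/9:ℂ)*b^2*c*e + (-4/27:ℂ)*b^3 + (-8/27:ℂ)*b^3*e + (-4/9:ℂ)*a*c^2 + (-8/9:ℂ)*a*c^2*e + (-8/9:ℂ)*a*b*c + (-16/9:ℂ)*a*b*c*e + (-4/9:ℂ)*a*b^2 + (-8/9:ℂ)*a*b^2*e + (-4/9:ℂ)*a^2*c + (-8/9:ℂ)*a^2*c*e + (-4/9:ℂ)*a^2*b + (-8/9:ℂ)*a^2*b*e + (-4/27:ℂ)*a^3 + (-8/27:ℂ)*a^3*e)) * he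

lemma cube2 (a b c e : ℂ) (he : e^2+e+1 = 0) :
    (-(2*e+1)/3*(a+e*b+e^2*c))^3 = (2*e+1)/9*((a^3+b^3+c^3)+3*e*(a^2*b+b^2*c+c^2*a)+3*e^2*(a*b^2+b*c^2+c*a^2)+6*(a*b*c)) := by
  linear_combination (((-1/9:ℂ)*c^3 + (-1/9:ℂ)*c^3*e + (2/9:ℂ)*c^3*e^2 + (-1/9:ℂ)*c^3*e^3 + (-1/9:ℂ)*c^3*e^4 + (2/9:ℂ)*c^3*e^5 + (-4/27:ℂ)*c^3*e^6 + (-8/27:ℂ)*c^3*e^7 + (-1/3:ℂ)*b*c^2*e^2 + (-1/3:ℂ)*b*c^2*e^3 + (2/3:ℂ)*b*c^2*e^4 + (-4/9:ℂ)*b*c^2*e^5 + (-8/9:ℂ)*b*c^2*e^6 + (-1/3:ℂ)*b^2*c*e + (-1/3:ℂ)*b^2*c*e^2 + (2/3:ℂ)*b^2*c*e^3 + (-4/9:ℂ)*b^2*c*e^4 + (-8/9:ℂ)*b^2*c*e^5 + (-1/9:ℂ)*b^3 + (-1/9:ℂ)*b^3*e + (2/9:ℂ)*b^3*e^2 + (-4/27:ℂ)*b^3*e^3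 + (-8/27:ℂ)*b^3*e^4 + (-1/3:ℂ)*a*c^2*e + (-1/3:ℂ)*a*c^2*e^2 + (2/3:ℂ)*a*c^2*e^3 + (-4/9:ℂ)*a*c^2*e^4 + (-8/9:ℂ)*a*c^2*e^5 + (-2/3:ℂ)*a*b*c + (-2/3:ℂ)*a*b*c*e + (4/3:ℂ)*a*b*c*e^2 + (-8/9:ℂ)*a*b*c*e^3 + (-16/9:ℂ)*a*b*c*e^4 + (-4/9:ℂ)*a*b^2*e^2 + (-8/9:ℂ)*a*b^2*e^3 + (-4/9:ℂ)*a^2*c*e^2 + (-8/9:ℂ)*a^2*c*e^3 + (-4/9:ℂ)*a^2*b*e + (-8/9:ℂ)*a^2*b*e^2 + (-4/27:ℂ)*a^3) + ((-8/27:ℂ)*a^3*e)) * he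

lemma cube3 (a b c e : ℂ) (he : e^2+e+1 = 0) :
    (-(2*e+1)/3*(a+e^2*b+e*c))^3 = (2*e+1)/9*((a^3+b^3+c^3)+3*e^2*(a^2*b+b^2*c+c^2*a)+3*e*(a*b^2+b*c^2+c*a^2)+6*(a*b*c)) := by
  linear_combination (((-1/9:ℂ)*c^3 + (-1/9:ℂ)*c^3*e + (2/9:ℂ)*c^3*e^2 + (-4/27:ℂ)*c^3*e^3 + (-8/27:ℂ)*c^3*e^4 + (-1/3:ℂ)*b*c^2*e + (-1/3:ℂ)*b*c^2*e^2 + (2/3:ℂ)*b*c^2*e^3 + (-4/9:ℂ)*b*c^2*e^4 + (-8/9:ℂ)*b*c^2*e^5 + (-1/3:ℂ)*b^2*c*e^2 + (-1/3:ℂ)*b^2*c*e^3 + (2/3:ℂ)*b^2*c*e^4 + (-4/9:ℂ)*b^2*c*e^5 + (-8/9:ℂ)*b^2*c*e^6 + (-1/9:ℂ)*b^3 + (-1/9:ℂ)*b^3*e + (2/9:ℂ)*b^3*e^2 + (-1/9:ℂ)*b^3*e^3 + (-1/9:ℂ)*b^3*e^4 + (2/9:ℂ)*b^3*e^5 + (-4/27:ℂ)*b^3*e^6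 + (-8/27:ℂ)*b^3*e^7 + (-4/9:ℂ)*a*c^2*e^2 + (-8/9:ℂ)*a*c^2*e^3 + (-2/3:ℂ)*a*b*c + (-2/3:ℂ)*a*b*c*e + (4/3:ℂ)*a*b*c*e^2 + (-8/9:ℂ)*a*b*c*e^3 + (-16/9:ℂ)*a*b*c*e^4 + (-1/3:ℂ)*a*b^2*e + (-1/3:ℂ)*a*b^2*e^2 + (2/3:ℂ)*a*b^2*e^3 + (-4/9:ℂ)*a*b^2*e^4 + (-8/9:ℂ)*a*b^2*e^5 + (-4/9:ℂ)*a^2*c*e + (-8/9:ℂ)*a^2*c*e^2 + (-4/9:ℂ)*a^2*b*e^2 + (-8/9:ℂ)*a^2*b*e^3 + (-4/27:ℂ)*a^3) + ((-8/27:ℂ)*a^3*e)) * he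

lemma absE6 (p r t m e Y1 Y2 Y3 : ℂ) (he : e^2+e+1 = 0)
    (h1 : Y1 = (2*e+1)/9*(p+3*r+3*t+6*m))
    (h2 : Y2 = (2*e+1)/9*(p+3*e*r+3*e^2*t+6*m))
    (h3 : Y3 = (2*e+1)/9*(p+3*e^2*r+3*e*t+6*m)) :
    Y1^2+Y2^2+Y3^2-10*(Y1*Y2+Y1*Y3+Y2*Y3) = (36:ℂ)*m^2 + (-12:ℂ)*r*t + (12:ℂ)*p*m + (1:ℂ)*p^2 := by
  subst h1 h2 h3
  linear_combination (((-48:ℂ)*m^2 + (-4:ℂ)*t*m + (-16:ℂ)*t*m*e + (-16:ℂ)*t*m*e^2 + (1/9:ℂ)*t^2 + (-7/9:ℂ)*t^2*e + (-13/3:ℂ)*t^2*e^2 + (-40/9:ℂ)*t^2*e^3 + (4/9:ℂ)*t^2*e^4 + (-4:ℂ)*r*m + (-16:ℂ)*r*m*e + (-16:ℂ)*r*m*e^2 + (110/9:ℂ)*r*t + (-122/9:ℂ)*r*t*e + (-10:ℂ)*r*t*e^2 + (16/9:ℂ)*r*t*e^3 + (-40/9:ℂ)*r*t*e^4 + (1/9:ℂ)*r^2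 + (-7/9:ℂ)*r^2*e + (-13/3:ℂ)*r^2*e^2 + (-40/9:ℂ)*r^2*e^3 + (4/9:ℂ)*r^2*e^4 + (-16:ℂ)*p*m + (-2/3:ℂ)*p*t + (-8/3:ℂ)*p*t*e + (-8/3:ℂ)*p*t*e^2 + (-2/3:ℂ)*p*r + (-8/3:ℂ)*p*r*e + (-8/3:ℂ)*p*r*e^2 + (-4/3:ℂ)*p^2)) * he

lemma absE9 (p r t m e Y1 Y2 Y3 : ℂ) (he : e^2+e+1 = 0)
    (h1 : Y1 = (2*e+1)/9*(p+3*r+3*t+6*m))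
    (h2 : Y2 = (2*e+1)/9*(p+3*e*r+3*e^2*t+6*m))
    (h3 : Y3 = (2*e+1)/9*(p+3*e^2*r+3*e*t+6*m)) :
    (Y1-Y2)*(Y1-Y3)*(Y2-Y3) = (-1:ℂ)*t^3 + (1:ℂ)*r^3 := by
  subst h1 h2 h3
  linear_combination (((1:ℂ)*t^3 + (-28/27:ℂ)*t^3*e + (-1/9:ℂ)*t^3*e^2 + (31/27:ℂ)*t^3*e^3 + (-14/27:ℂ)*t^3*e^4 + (-4/9:ℂ)*t^3*e^5 + (8/27:ℂ)*t^3*e^6 + (-1/27:ℂ)*r*t^2*e + (-1/9:ℂ)*r*t^2*e^2 + (1/9:ℂ)*r*t^2*e^3 + (11/27:ℂ)*r*t^2*e^4 + (-2/9:ℂ)*r*t^2*e^5 + (-4/9:ℂ)*r*t^2*e^6 + (8/27:ℂ)*r*t^2*e^7 + (1/27:ℂ)*r^2*t*e + (1/9:ℂ)*r^2*t*e^2 + (-1/9:ℂ)*r^2*t*e^3 + (-11/27:ℂ)*r^2*t*e^4 + (2/9:ℂ)*r^2*t*e^5 + (4/9:ℂ)*r^2*t*e^6 + (-8/27:ℂ)*r^2*t*e^7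 + (-1:ℂ)*r^3 + (28/27:ℂ)*r^3*e + (1/9:ℂ)*r^3*e^2 + (-31/27:ℂ)*r^3*e^3 + (14/27:ℂ)*r^3*e^4 + (4/9:ℂ)*r^3*e^5 + (-8/27:ℂ)*r^3*e^6)) * he

lemma absE12 (p r t m e Y1 Y2 Y3 : ℂ) (he : e^2+e+1 = 0)
    (h1 : Y1 = (2*e+1)/9*(p+3*r+3*t+6*m))
    (h2 : Y2 = (2*e+1)/9*(p+3*e*r+3*e^2*t+6*m))
    (h3 : Y3 = (2*e+1)/9*(p+3*e^2*r+3*e*t+6*m)) :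
    (Y1^4+Y2^4+Y3^4)+4*(Y1^3*Y2+Y1^3*Y3+Y2^3*Y1+Y2^3*Y3+Y3^3*Y1+Y3^3*Y2)+6*(Y1^2*Y2^2+Y1^2*Y3^2+Y2^2*Y3^2)+228*(Y1^2*Y2*Y3+Y2^2*Y1*Y3+Y3^2*Y1*Y2) = (1296:ℂ)*m^4 + (144:ℂ)*t^3*m + (-864:ℂ)*r*t*m^2 + (144:ℂ)*r^3*m + (864:ℂ)*p*m^3 + (24:ℂ)*p*t^3 + (-288:ℂ)*p*r*t*m + (24:ℂ)*p*r^3 + (216:ℂ)*p^2*m^2 + (-24:ℂ)*p^2*r*t + (24:ℂ)*p^3*m + (1:ℂ)*p^4 := by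
  subst h1 h2 h3
  linear_combination (((-1152:ℂ)*m^4 + (2304:ℂ)*m^4*e + (2304:ℂ)*m^4*e^2 + (96:ℂ)*t*m^3 + (768:ℂ)*t*m^3*e + (2304:ℂ)*t*m^3*e^2 + (3072:ℂ)*t*m^3*e^3 + (1536:ℂ)*t*m^3*e^4 + (40/3:ℂ)*t^2*m^2 + (152:ℂ)*t^2*m^2*e + (696:ℂ)*t^2*m^2*e^2 + (4864/3:ℂ)*t^2*m^2*e^3 + (1984:ℂ)*t^2*m^2*e^4 + (1152:ℂ)*t^2*m^2*e^5 + (640/3:ℂ)*t^2*m^2*e^6 + (-3880/27:ℂ)*t^3*m + (4112/27:ℂ)*t^3*m*e + (1640/27:ℂ)*t^3*m*e^2 + (2144/27:ℂ)*t^3*m*e^3 + (17480/27:ℂ)*t^3*m*e^4 + (18752/27:ℂ)*t^3*m*e^5 + (8000/27:ℂ)*t^3*m*e^6 + (2816/27:ℂ)*t^3*m*e^7 + (128/27:ℂ)*t^3*m*e^8 + (1/81:ℂ)*t^4 + (11/81:ℂ)*t^4*e + (2/3:ℂ)*t^4*e^2 + (125/27:ℂ)*t^4*e^3 + (682/27:ℂ)*t^4*e^4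 + (209/3:ℂ)*t^4*e^5 + (2467/27:ℂ)*t^4*e^6 + (1280/27:ℂ)*t^4*e^7 + (8/3:ℂ)*t^4*e^8 + (80/81:ℂ)*t^4*e^9 + (16/81:ℂ)*t^4*e^10 + (96:ℂ)*r*m^3 + (768:ℂ)*r*m^3*e + (2304:ℂ)*r*m^3*e^2 + (3072:ℂ)*r*m^3*e^3 + (1536:ℂ)*r*m^3*e^4) + ((2672/3:ℂ)*r*t*m^2 + (-560:ℂ)*r*t*m^2*e + (1424:ℂ)*r*t*m^2*e^2 + (12800/3:ℂ)*r*t*m^2*e^3 + (3200:ℂ)*r*t*m^2*e^4 + (1792:ℂ)*r*t*m^2*e^5 + (2816/3:ℂ)*r*t*m^2*e^6 + (8/9:ℂ)*r*t^2*m + (224/9:ℂ)*r*t^2*m*e + (1832/9:ℂ)*r*t^2*m*e^2 + (7040/9:ℂ)*r*t^2*m*e^3 + (14456/9:ℂ)*r*t^2*m*e^4 + (16064/9:ℂ)*r*t^2*m*e^5 + (9152/9:ℂ)*r*t^2*m*e^6 + (2816/9:ℂ)*r*t^2*m*e^7 + (896/9:ℂ)*r*t^2*m*e^8 + (4/81:ℂ)*r*t^3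 + (44/81:ℂ)*r*t^3*e + (16/3:ℂ)*r*t^3*e^2 + (932/27:ℂ)*r*t^3*e^3 + (3376/27:ℂ)*r*t^3*e^4 + (772/3:ℂ)*r*t^3*e^5 + (8140/27:ℂ)*r*t^3*e^6 + (5120/27:ℂ)*r*t^3*e^7 + (160/3:ℂ)*r*t^3*e^8 + (320/81:ℂ)*r*t^3*e^9 + (64/81:ℂ)*r*t^3*e^10 + (40/3:ℂ)*r^2*m^2 + (152:ℂ)*r^2*m^2*e + (696:ℂ)*r^2*m^2*e^2 + (4864/3:ℂ)*r^2*m^2*e^3 + (1984:ℂ)*r^2*m^2*e^4 + (1152:ℂ)*r^2*m^2*e^5 + (640/3:ℂ)*r^2*m^2*e^6 + (8/9:ℂ)*r^2*t*m + (224/9:ℂ)*r^2*t*m*e + (1832/9:ℂ)*r^2*t*m*e^2 + (7040/9:ℂ)*r^2*t*m*e^3 + (14456/9:ℂ)*r^2*t*m*e^4 + (16064/9:ℂ)*r^2*t*m*e^5) + ((9152/9:ℂ)*r^2*t*m*e^6 + (2816/9:ℂ)*r^2*t*m*e^7 + (896/9:ℂ)*r^2*t*m*e^8 + (2/27:ℂ)*r^2*t^2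 + (22/27:ℂ)*r^2*t^2*e + (28/3:ℂ)*r^2*t^2*e^2 + (538/9:ℂ)*r^2*t^2*e^3 + (1796/9:ℂ)*r^2*t^2*e^4 + (1126/3:ℂ)*r^2*t^2*e^5 + (3782/9:ℂ)*r^2*t^2*e^6 + (2560/9:ℂ)*r^2*t^2*e^7 + (304/3:ℂ)*r^2*t^2*e^8 + (160/27:ℂ)*r^2*t^2*e^9 + (32/27:ℂ)*r^2*t^2*e^10 + (-3880/27:ℂ)*r^3*m + (4112/27:ℂ)*r^3*m*e + (1640/27:ℂ)*r^3*m*e^2 + (2144/27:ℂ)*r^3*m*e^3 + (17480/27:ℂ)*r^3*m*e^4 + (18752/27:ℂ)*r^3*m*e^5 + (8000/27:ℂ)*r^3*m*e^6 + (2816/27:ℂ)*r^3*m*e^7 + (128/27:ℂ)*r^3*m*e^8 + (4/81:ℂ)*r^3*t + (44/81:ℂ)*r^3*t*e + (16/3:ℂ)*r^3*t*e^2 + (932/27:ℂ)*r^3*t*e^3 + (3376/27:ℂ)*r^3*t*e^4 + (772/3:ℂ)*r^3*t*e^5 + (8140/27:ℂ)*r^3*t*e^6 + (5120/27:ℂ)*r^3*t*e^7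 + (160/3:ℂ)*r^3*t*e^8 + (320/81:ℂ)*r^3*t*e^9 + (64/81:ℂ)*r^3*t*e^10 + (1/81:ℂ)*r^4 + (11/81:ℂ)*r^4*e + (2/3:ℂ)*r^4*e^2 + (125/27:ℂ)*r^4*e^3 + (682/27:ℂ)*r^4*e^4 + (209/3:ℂ)*r^4*e^5) + ((2467/27:ℂ)*r^4*e^6 + (1280/27:ℂ)*r^4*e^7 + (8/3:ℂ)*r^4*e^8 + (80/81:ℂ)*r^4*e^9 + (16/81:ℂ)*r^4*e^10 + (-768:ℂ)*p*m^3 + (1536:ℂ)*p*m^3*e + (1536:ℂ)*p*m^3*e^2 + (48:ℂ)*p*t*m^2 + (384:ℂ)*p*t*m^2*e + (1152:ℂ)*p*t*m^2*e^2 + (1536:ℂ)*p*t*m^2*e^3 + (768:ℂ)*p*t*m^2*e^4 + (40/9:ℂ)*p*t^2*m + (152/3:ℂ)*p*t^2*m*e + (232:ℂ)*p*t^2*m*e^2 + (4864/9:ℂ)*p*t^2*m*e^3 + (1984/3:ℂ)*p*t^2*m*e^4 + (384:ℂ)*p*t^2*m*e^5 + (640/9:ℂ)*p*t^2*m*e^6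 + (-1940/81:ℂ)*p*t^3 + (2056/81:ℂ)*p*t^3*e + (820/81:ℂ)*p*t^3*e^2 + (1072/81:ℂ)*p*t^3*e^3 + (8740/81:ℂ)*p*t^3*e^4 + (9376/81:ℂ)*p*t^3*e^5 + (4000/81:ℂ)*p*t^3*e^6 + (1408/81:ℂ)*p*t^3*e^7 + (64/81:ℂ)*p*t^3*e^8 + (48:ℂ)*p*r*m^2 + (384:ℂ)*p*r*m^2*e + (1152:ℂ)*p*r*m^2*e^2 + (1536:ℂ)*p*r*m^2*e^3 + (768:ℂ)*p*r*m^2*e^4 + (2672/9:ℂ)*p*r*t*m + (-560/3:ℂ)*p*r*t*m*e + (1424/3:ℂ)*p*r*t*m*e^2 + (12800/9:ℂ)*p*r*t*m*e^3 + (3200/3:ℂ)*p*r*t*m*e^4 + (1792/3:ℂ)*p*r*t*m*e^5) + ((2816/9:ℂ)*p*r*t*m*e^6 + (4/27:ℂ)*p*r*t^2 + (112/27:ℂ)*p*r*t^2*e + (916/27:ℂ)*p*r*t^2*e^2 + (3520/27:ℂ)*p*r*t^2*e^3 + (7228/27:ℂ)*p*r*t^2*e^4 + (8032/27:ℂ)*p*r*t^2*e^5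 + (4576/27:ℂ)*p*r*t^2*e^6 + (1408/27:ℂ)*p*r*t^2*e^7 + (448/27:ℂ)*p*r*t^2*e^8 + (40/9:ℂ)*p*r^2*m + (152/3:ℂ)*p*r^2*m*e + (232:ℂ)*p*r^2*m*e^2 + (4864/9:ℂ)*p*r^2*m*e^3 + (1984/3:ℂ)*p*r^2*m*e^4 + (384:ℂ)*p*r^2*m*e^5 + (640/9:ℂ)*p*r^2*m*e^6 + (4/27:ℂ)*p*r^2*t + (112/27:ℂ)*p*r^2*t*e + (916/27:ℂ)*p*r^2*t*e^2 + (3520/27:ℂ)*p*r^2*t*e^3 + (7228/27:ℂ)*p*r^2*t*e^4 + (8032/27:ℂ)*p*r^2*t*e^5 + (4576/27:ℂ)*p*r^2*t*e^6 + (1408/27:ℂ)*p*r^2*t*e^7 + (448/27:ℂ)*p*r^2*t*e^8 + (-1940/81:ℂ)*p*r^3 + (2056/81:ℂ)*p*r^3*e + (820/81:ℂ)*p*r^3*e^2 + (1072/81:ℂ)*p*r^3*e^3 + (8740/81:ℂ)*p*r^3*e^4 + (9376/81:ℂ)*p*r^3*e^5 + (4000/81:ℂ)*p*r^3*e^6 +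 (1408/81:ℂ)*p*r^3*e^7 + (64/81:ℂ)*p*r^3*e^8 + (-192:ℂ)*p^2*m^2 + (384:ℂ)*p^2*m^2*e + (384:ℂ)*p^2*m^2*e^2 + (8:ℂ)*p^2*t*m + (64:ℂ)*p^2*t*m*e) + ((192:ℂ)*p^2*t*m*e^2 + (256:ℂ)*p^2*t*m*e^3 + (128:ℂ)*p^2*t*m*e^4 + (10/27:ℂ)*p^2*t^2 + (38/9:ℂ)*p^2*t^2*e + (58/3:ℂ)*p^2*t^2*e^2 + (1216/27:ℂ)*p^2*t^2*e^3 + (496/9:ℂ)*p^2*t^2*e^4 + (32:ℂ)*p^2*t^2*e^5 + (160/27:ℂ)*p^2*t^2*e^6 + (8:ℂ)*p^2*r*m + (64:ℂ)*p^2*r*m*e + (192:ℂ)*p^2*r*m*e^2 + (256:ℂ)*p^2*r*m*e^3 + (128:ℂ)*p^2*r*m*e^4 + (668/27:ℂ)*p^2*r*t + (-140/9:ℂ)*p^2*r*t*e + (356/9:ℂ)*p^2*r*t*e^2 + (3200/27:ℂ)*p^2*r*t*e^3 + (800/9:ℂ)*p^2*r*t*e^4 + (448/9:ℂ)*p^2*r*t*e^5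 + (704/27:ℂ)*p^2*r*t*e^6 + (10/27:ℂ)*p^2*r^2 + (38/9:ℂ)*p^2*r^2*e + (58/3:ℂ)*p^2*r^2*e^2 + (1216/27:ℂ)*p^2*r^2*e^3 + (496/9:ℂ)*p^2*r^2*e^4 + (32:ℂ)*p^2*r^2*e^5 + (160/27:ℂ)*p^2*r^2*e^6 + (-64/3:ℂ)*p^3*m + (128/3:ℂ)*p^3*m*e + (128/3:ℂ)*p^3*m*e^2 + (4/9:ℂ)*p^3*t + (32/9:ℂ)*p^3*t*e + (32/3:ℂ)*p^3*t*e^2 + (128/9:ℂ)*p^3*t*e^3 + (64/9:ℂ)*p^3*t*e^4 + (4/9:ℂ)*p^3*r + (32/9:ℂ)*p^3*r*e + (32/3:ℂ)*p^3*r*e^2) + ((128/9:ℂ)*p^3*r*e^3 + (64/9:ℂ)*p^3*r*e^4 + (-8/9:ℂ)*p^4 + (16/9:ℂ)*p^4*e + (16/9:ℂ)*p^4*e^2)) * he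

lemma combineE6 (u1 u2 u3 Y1 Y2 Y3 : ℂ) (h1 : u1^3 = Y1)
    (h2 : u2^3 = Y2) (h3 : u3^3 = Y3) :
    C6 u1 u2 u3 = (Y1)^2+(Y2)^2+(Y3)^2-10*((Y1)*(Y2)+(Y1)*(Y3)+(Y2)*(Y3)) := by
  simp only [C6]
  rw [← h1, ← h2, ← h3]
  ring

lemma combineE9 (u1 u2 u3 Y1 Y2 Y3 : ℂ) (h1 : u1^3 = Y1)
    (h2 : u2^3 = Y2) (h3 : u3^3 = Y3) :
    C9 u1 u2 u3 = ((Y1)-(Y2))*((Y1)-(Y3))*((Y2)-(Y3)) := by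
  simp only [C9]
  rw [← h1, ← h2, ← h3]

lemma combineE12 (u1 u2 u3 Y1 Y2 Y3 : ℂ) (h1 : u1^3 = Y1)
    (h2 : u2^3 = Y2) (h3 : u3^3 = Y3) :
    C12 u1 u2 u3 = ((Y1)^4+(Y2)^4+(Y3)^4)+4*((Y1)^3*(Y2)+(Y1)^3*(Y3)+(Y2)^3*(Y1)+(Y2)^3*(Y3)+(Y3)^3*(Y1)+(Y3)^3*(Y2))+6*((Y1)^2*(Y2)^2+(Y1)^2*(Y3)^2+(Y2)^2*(Y3)^2)+228*((Y1)^2*(Y2)*(Y3)+(Y2)^2*(Y1)*(Y3)+(Y3)^2*(Y1)*(Y2)) := by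
  simp only [C12]
  rw [← h1, ← h2, ← h3]
  ring

lemma hback6 (x : Fin 3 → ℂ) :
    C6 (x 0) (x 1) (x 2) = (36:ℂ)*(x 0*x 1*x 2)^2 + (-12:ℂ)*(x 0^2*x 1+x 1^2*x 2+x 2^2*x 0)*(x 0*x 1^2+x 1*x 2^2+x 2*x 0^2) + (12:ℂ)*(x 0^3+x 1^3+x 2^3)*(x 0*x 1*x 2) + (1:ℂ)*(x 0^3+x 1^3+x 2^3)^2 := by
  simp only [C6]
  ring

lemma hback9 (x : Fin 3 → ℂ) :
    C9 (x 0) (x 1) (x 2) = (-1:ℂ)*(x 0*x 1^2+x 1*x 2^2+x 2*x 0^2)^3 + (1:ℂ)*(x 0^2*x 1+x 1^2*x 2+x 2^2*x 0)^3 := by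
  simp only [C9]
  ring

lemma hback12 (x : Fin 3 → ℂ) :
    C12 (x 0) (x 1) (x 2) = (1296:ℂ)*(x 0*x 1*x 2)^4 + (144:ℂ)*(x 0*x 1^2+x 1*x 2^2+x 2*x 0^2)^3*(x 0*x 1*x 2) + (-864:ℂ)*(x 0^2*x 1+x 1^2*x 2+x 2^2*x 0)*(x 0*x 1^2+x 1*x 2^2+x 2*x 0^2)*(x 0*x 1*x 2)^2 + (144:ℂ)*(x 0^2*x 1+x 1^2*x 2+x 2^2*x 0)^3*(x 0*x 1*x 2) + (864:ℂ)*(x 0^3+x 1^3+x 2^3)*(x 0*x 1*x 2)^3 + (24:ℂ)*(x 0^3+x 1^3+x 2^3)*(x 0*x 1^2+x 1*x 2^2+x 2*x 0^2)^3 + (-288:ℂ)*(x 0^3+x 1^3+x 2^3)*(x 0^2*x 1+x 1^2*x 2+x 2^2*x 0)*(x 0*x 1^2+x 1*x 2^2+x 2*x 0^2)*(x 0*x 1*x 2) + (24:ℂ)*(x 0^3+x 1^3+x 2^3)*(x 0^2*x 1+x 1^2*x 2+x 2^2*x 0)^3 + (216:ℂ)*(x 0^3+x 1^3+x 2^3)^2*(x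 0*x 1*x 2)^2 + (-24:ℂ)*(x 0^3+x 1^3+x 2^3)^2*(x 0^2*x 1+x 1^2*x 2+x 2^2*x 0)*(x 0*x 1^2+x 1*x 2^2+x 2*x 0^2) + (24:ℂ)*(x 0^3+x 1^3+x 2^3)^3*(x 0*x 1*x 2) + (1:ℂ)*(x 0^3+x 1^3+x 2^3)^4 := by
  simp only [C12]
  ring

theorem C6_C9_C12_K_invariant :
    ∀ M ∈ K, ∀ x : Fin 3 → ℂ,
      C6 ((M : GL (Fin 3) ℂ).val.mulVec x 0) ((M : GL (Fin 3) ℂ).val.mulVec x 1)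
          ((M : GL (Fin 3) ℂ).val.mulVec x 2) = C6 (x 0) (x 1) (x 2) ∧
      C9 ((M : GL (Fin 3) ℂ).val.mulVec x 0) ((M : GL (Fin 3) ℂ).val.mulVec x 1)
          ((M : GL (Fin 3) ℂ).val.mulVec x 2) = C9 (x 0) (x 1) (x 2) ∧
      C12 ((M : GL (Fin 3) ℂ).val.mulVec x 0) ((M : GL (Fin 3) ℂ).val.mulVec x 1)
          ((M : GL (Fin 3) ℂ).val.mulVec x 2) = C12 (x 0) (x 1) (x 2) := by
  intro M hM
  refine Subgroup.closure_induction
    (p := fun N _ => ∀ x : Fin 3 → ℂ,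
      C6 ((N : GL (Fin 3) ℂ).val.mulVec x 0) ((N : GL (Fin 3) ℂ).val.mulVec x 1)
          ((N : GL (Fin 3) ℂ).val.mulVec x 2) = C6 (x 0) (x 1) (x 2) ∧
      C9 ((N : GL (Fin 3) ℂ).val.mulVec x 0) ((N : GL (Fin 3) ℂ).val.mulVec x 1)
          ((N : GL (Fin 3) ℂ).val.mulVec x 2) = C9 (x 0) (x 1) (x 2) ∧
      C12 ((N : GL (Fin 3) ℂ).val.mulVec x 0) ((N : GL (Fin 3) ℂ).val.mulVec x 1)
          ((N : GL (Fin 3) ℂ).val.mulVec x 2) = C12 (x 0) (x 1) (x 2)) ?_ ?_ ?_ ?_ hM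
  · -- generators
    intro g hg
    simp only [Set.mem_insert_iff, Set.mem_singleton_iff] at hg
    rcases hg with rfl | rfl | rfl | rfl
    · -- genA
      intro x
      have hv0 : (genA.val).mulVec x 0 = x 1 := by
        rw [show (genA.val) = matA from rfl]
        simp [matA, Matrix.mulVec, dotProduct, Fin.sum_univ_three]
      have hv1 : (genA.val).mulVec x 1 = x 2 := by
        rw [show (genA.val) = matA from rfl]
        simp [matA, Matrix.mulVec, dotProduct, Fin.sum_univ_three]
      have hv2 : (genA.val).mulVec x 2 = x 0 := by
        rw [show (genA.val) = matA from rfl]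
        simp [matA, Matrix.mulVec, dotProduct, Fin.sum_univ_three]
      rw [hv0, hv1, hv2]
      refine ⟨?_, ?_, ?_⟩ <;> · simp only [C6, C9, C12]; ring
    · -- genC
      intro x
      have hv0 : (genC.val).mulVec x 0 = x 0 := by
        rw [show (genC.val) = matC from rfl]
        simp [matC, Matrix.mulVec, dotProduct, Fin.sum_univ_three]
      have hv1 : (genC.val).mulVec x 1 = ε * x 1 := by
        rw [show (genC.val) = matC from rfl]
        simp [matC, Matrix.mulVec, dotProduct, Fin.sum_univ_three]
      have hv2 : (genC.val).mulVec x 2 = ε ^ 2 * x 2 := by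
        rw [show (genC.val) = matC from rfl]
        simp [matC, Matrix.mulVec, dotProduct, Fin.sum_univ_three]
      rw [hv0, hv1, hv2]
      exact ⟨keyC6 (x 0) (x 1) (x 2) ε hε3, keyC9 (x 0) (x 1) (x 2) ε hε3,
        keyC12 (x 0) (x 1) (x 2) ε hε3⟩
    · -- genD
      intro x
      have hv0 : (genD.val).mulVec x 0 = x 0 := by
        rw [show (genD.val) = matD from rfl]
        simp [matD, Matrix.mulVec, dotProduct, Fin.sum_univ_three]
      have hv1 : (genD.val).mulVec x 1 = ε * x 1 := by
        rw [show (genD.val) = matD from rfl]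
        simp [matD, Matrix.mulVec, dotProduct, Fin.sum_univ_three]
      have hv2 : (genD.val).mulVec x 2 = ε * x 2 := by
        rw [show (genD.val) = matD from rfl]
        simp [matD, Matrix.mulVec, dotProduct, Fin.sum_univ_three]
      rw [hv0, hv1, hv2]
      exact ⟨keyD6 (x 0) (x 1) (x 2) ε hε3, keyD9 (x 0) (x 1) (x 2) ε hε3,
        keyD12 (x 0) (x 1) (x 2) ε hε3⟩
    · -- genE
      intro x
      have hval : (genE.val) = matE := rfl
      have hv0 : (genE.val).mulVec x 0 = -(2*ε+1)/3*(x 0+x 1+x 2) := by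
        rw [hval, matE, Matrix.smul_mulVec, htval]
        simp [Matrix.mulVec, dotProduct, Fin.sum_univ_three]
        try ring
      have hv1 : (genE.val).mulVec x 1 = -(2*ε+1)/3*(x 0+ε*x 1+ε^2*x 2) := by
        rw [hval, matE, Matrix.smul_mulVec, htval]
        simp [Matrix.mulVec, dotProduct, Fin.sum_univ_three]
        try ring
      have hv2 : (genE.val).mulVec x 2 = -(2*ε+1)/3*(x 0+ε^2*x 1+ε*x 2) := by
        rw [hval, matE, Matrix.smul_mulVec, htval]
        simp [Matrix.mulVec, dotProduct, Fin.sum_univ_three]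
        try ring
      have h1 : ((genE.val).mulVec x 0)^3 = (2*ε+1)/9*((x 0^3+x 1^3+x 2^3)+3*(x 0^2*x 1+x 1^2*x 2+x 2^2*x 0)+3*(x 0*x 1^2+x 1*x 2^2+x 2*x 0^2)+6*(x 0*x 1*x 2)) := by
        rw [hv0]; exact cube1 (x 0) (x 1) (x 2) ε he2
      have h2 : ((genE.val).mulVec x 1)^3 = (2*ε+1)/9*((x 0^3+x 1^3+x 2^3)+3*ε*(x 0^2*x 1+x 1^2*x 2+x 2^2*x 0)+3*ε^2*(x 0*x 1^2+x 1*x 2^2+x 2*x 0^2)+6*(x 0*x 1*x 2)) := by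
        rw [hv1]; exact cube2 (x 0) (x 1) (x 2) ε he2
      have h3 : ((genE.val).mulVec x 2)^3 = (2*ε+1)/9*((x 0^3+x 1^3+x 2^3)+3*ε^2*(x 0^2*x 1+x 1^2*x 2+x 2^2*x 0)+3*ε*(x 0*x 1^2+x 1*x 2^2+x 2*x 0^2)+6*(x 0*x 1*x 2)) := by
        rw [hv2]; exact cube3 (x 0) (x 1) (x 2) ε he2
      refine ⟨?_, ?_, ?_⟩
      · exact ((combineE6 _ _ _ _ _ _ h1 h2 h3).trans
          (absE6 _ _ _ _ ε _ _ _ he2 rfl rfl rfl)).trans (hback6 x).symm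
      · exact ((combineE9 _ _ _ _ _ _ h1 h2 h3).trans
          (absE9 _ _ _ _ ε _ _ _ he2 rfl rfl rfl)).trans (hback9 x).symm
      · exact ((combineE12 _ _ _ _ _ _ h1 h2 h3).trans
          (absE12 _ _ _ _ ε _ _ _ he2 rfl rfl rfl)).trans (hback12 x).symm
  · -- one
    intro x
    rw [Units.val_one, Matrix.one_mulVec]
    exact ⟨rfl, rfl, rfl⟩
  · -- mul
    intro N1 N2 _ _ ih1 ih2 x
    have hcomp : ((N1 * N2).val).mulVec x = (N1.val).mulVec ((N2.val).mulVec x) := by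
      rw [Units.val_mul, ← Matrix.mulVec_mulVec]
    obtain ⟨a1, a2, a3⟩ := ih1 ((N2.val).mulVec x)
    obtain ⟨b1, b2, b3⟩ := ih2 x
    rw [hcomp]
    exact ⟨a1.trans b1, a2.trans b2, a3.trans b3⟩
  · -- inv
    intro N _ ih x
    have hy : (N.val).mulVec (((N⁻¹ : GL (Fin 3) ℂ).val).mulVec x) = x := by
      rw [Matrix.mulVec_mulVec, ← Units.val_mul, mul_inv_cancel, Units.val_one,
        Matrix.one_mulVec]
    obtain ⟨a1, a2, a3⟩ := ih (((N⁻¹ : GL (Fin 3) ℂ).val).mulVec x)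
    rw [hy] at a1 a2 a3
    exact ⟨a1.symm, a2.symm, a3.symm⟩
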